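/- If f: ℝ^d → ℝ is convex and satisfies the quadratic growth condition f(x) − f* ≥ (μ/2)‖x − x_p‖² for all x, then f satisfies the restricted secant inequality ⟨∇f(x), x − x_p⟩ ≥ (μ/2)‖x − x_p‖² for all x. -/

import Mathlib

open RealInnerProductSpace

lemma grad_inner_eq {d : ℕ} (f : EuclideanSpace ℝ (Fin d) → ℝ) (x v : EuclideanSpace ℝ (Fin d)) :
    ⟪gradient f x, v⟫ = fderiv ℝ f x v := by
  unfold gradient
  exact InnerProductSpace.toDual_symm_apply

lemma subgrad_ineq {d : ℕ} (f : EuclideanSpace ℝ (Fin d) → ℝ)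
    (hdiff : Differentiable ℝ f) (hconv : ConvexOn ℝ Set.univ f)
    (x y : EuclideanSpace ℝ (Fin d)) :
    f x + ⟪gradient f x, y - x⟫ ≤ f y := by
  set φ : ℝ → ℝ := fun t => f (x + t • (y - x)) with hφdef
  have hline : HasDerivAt (fun t : ℝ => x + t • (y - x)) (y - x) 0 := by
    simpa using ((hasDerivAt_id (0:ℝ)).smul_const (y - x)).const_add x
  have hφ : HasDerivAt φ (fderiv ℝ f x (y - x)) 0 := by
    have h0 : HasFDerivAt f (fderiv ℝ f x) ((fun t : ℝ => x + t • (y - x)) 0) := by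
      simpa using (hdiff x).hasFDerivAt
    exact h0.comp_hasDerivAt 0 hline
  have hslope : ∀ t ∈ Set.Ioc (0:ℝ) 1, (φ t - φ 0) / t ≤ f y - f x := by
    intro t ht
    obtain ⟨ht1, ht2⟩ := ht
    have hconvt := hconv.2 (Set.mem_univ x) (Set.mem_univ y)
      (show (0:ℝ) ≤ 1 - t by linarith) (le_of_lt ht1) (show (1 - t) + t = 1 by ring)
    have : φ t ≤ (1 - t) * f x + t * f y := by
      have hpt : (1 - t) • x + t • y = x + t • (y - x) := by
        module
      simpa [hφdef, hpt, smul_eq_mul] using hconvt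
    have hφ0 : φ 0 = f x := by simp [hφdef]
    rw [div_le_iff₀ ht1, hφ0]
    nlinarith
  have htend : Filter.Tendsto (fun t => (φ t - φ 0) / t) (nhdsWithin 0 (Set.Ioi 0))
      (nhds (fderiv ℝ f x (y - x))) := by
    have h2 : Filter.Tendsto (slope φ 0) (nhdsWithin 0 (Set.Ioi 0)) (nhds (fderiv ℝ f x (y - x))) :=
      (hasDerivAt_iff_tendsto_slope.mp hφ).mono_left
        (nhdsWithin_mono 0 (by intro t ht; exact ne_of_gt ht))
    refine h2.congr (fun t => ?_)
    simp [slope, div_eq_inv_mul, mul_comm]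
  have hle : fderiv ℝ f x (y - x) ≤ f y - f x := by
    refine le_of_tendsto htend ?_
    filter_upwards [Ioc_mem_nhdsGT_of_mem (Set.left_mem_Ico.mpr one_pos)] with t ht
    exact hslope t ht
  rw [grad_inner_eq]
  linarith

theorem qg_convex_implies_rsi
    {d : ℕ} (f : EuclideanSpace ℝ (Fin d) → ℝ) (μ fstar : ℝ) (hμ : 0 < μ)
    (hdiff : Differentiable ℝ f)
    (hconv : ConvexOn ℝ Set.univ f)
    (S : Set (EuclideanSpace ℝ (Fin d)))
    (hS : S = {z | ∀ y, f z ≤ f y}) (hSne : S.Nonempty)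
    (hfstar : ∀ z ∈ S, f z = fstar)
    (p : EuclideanSpace ℝ (Fin d) → EuclideanSpace ℝ (Fin d))
    (hproj : ∀ x, p x ∈ S ∧ ∀ y ∈ S, ‖x - p x‖ ≤ ‖x - y‖)
    (hQG : ∀ x, μ / 2 * ‖x - p x‖ ^ 2 ≤ f x - fstar) :
    ∀ x, μ / 2 * ‖x - p x‖ ^ 2 ≤ ⟪gradient f x, x - p x⟫ := by
  intro x
  have hsub := subgrad_ineq f hdiff hconv x (p x)
  have hfp : f (p x) = fstar := hfstar _ (hproj x).1
  have hinner : ⟪gradient f x, x - p x⟫ = - ⟪gradient f x, p x - x⟫ := by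
    rw [← inner_neg_right]; congr 1; abel
  have := hQG x
  rw [hinner]
  linarith [hsub, hfp ▸ hsub]
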